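/- arXiv:0909.1409 — 3 statements merged into one kernel-verified Lean document; each statement's English description precedes it below -/
import Mathlib

section
/- Let ν be a Lévy measure on ℝ^d (a measure with ν({0}) = 0 and ∫ (|x|² ∧ 1) ν(dx) < ∞), let α be a real number, and define a measure ν̃ by ν̃(B) = ∫_0^1 ν(s^{-1}B) s^{-α-1} ds. Then for the twice-iterated map, (B ↦ ∫_0^1 ν̃(s^{-1}B) s^{-α-1} ds) equals B ↦ ∫_0^1 ν(u^{-1}B) u^{-α-1} log(u^{-1}) du. -/
open MeasureTheory
open scoped ENNReal Pointwise

lemma aux_scale (F : ℝ → ℝ≥0∞) (hF : Measurable F) {s : ℝ} (hs : 0 < s) :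
    ∫⁻ t in Set.Ioo (0:ℝ) 1, F (s * t)
      = ENNReal.ofReal s⁻¹ * ∫⁻ u in Set.Ioo (0:ℝ) s, F u := by
  have hpre : ((s * ·) ⁻¹' Set.Ioo (0:ℝ) s) = Set.Ioo (0:ℝ) 1 := by
    ext t
    simp only [Set.mem_preimage, Set.mem_Ioo]
    constructor
    · rintro ⟨h1, h2⟩
      constructor
      · by_contra h
        push_neg at h
        nlinarith
      · nlinarith
    · rintro ⟨h1, h2⟩
      exact ⟨by positivity, by nlinarith⟩
  have hmap := Real.map_volume_mul_left hs.ne'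
  calc ∫⁻ t in Set.Ioo (0:ℝ) 1, F (s * t)
      = ∫⁻ u, F u ∂(Measure.map (s * ·) (volume.restrict (Set.Ioo (0:ℝ) 1))) := by
        rw [lintegral_map hF (measurable_const_mul s)]
    _ = ∫⁻ u, F u ∂((Measure.map (s * ·) volume).restrict (Set.Ioo (0:ℝ) s)) := by
        rw [Measure.restrict_map (measurable_const_mul s) measurableSet_Ioo, hpre]
    _ = ENNReal.ofReal s⁻¹ * ∫⁻ u in Set.Ioo (0:ℝ) s, F u := by
        rw [hmap, Measure.restrict_smul, lintegral_smul_measure,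
          abs_of_pos (inv_pos.mpr hs), smul_eq_mul]

lemma aux_log {u : ℝ} (hu : 0 < u) (hu1 : u < 1) :
    ∫⁻ s in Set.Ioo u 1, ENNReal.ofReal s⁻¹ = ENNReal.ofReal (Real.log u⁻¹) := by
  have hint : IntervalIntegrable (fun x : ℝ => x⁻¹) volume u 1 := by
    rw [intervalIntegrable_inv_iff]
    right
    intro h
    rw [Set.mem_uIcc] at h
    rcases h with ⟨h1, _⟩ | ⟨h1, _⟩ <;> linarith
  have hIoc : IntegrableOn (fun x : ℝ => x⁻¹) (Set.Ioc u 1) volume :=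
    (intervalIntegrable_iff_integrableOn_Ioc_of_le hu1.le).mp hint
  have hIoo : IntegrableOn (fun x : ℝ => x⁻¹) (Set.Ioo u 1) volume :=
    hIoc.mono_set Set.Ioo_subset_Ioc_self
  have h1 : ∫⁻ s in Set.Ioo u 1, ENNReal.ofReal s⁻¹
      = ENNReal.ofReal (∫ s in Set.Ioo u 1, s⁻¹) := by
    rw [ofReal_integral_eq_lintegral_ofReal hIoo]
    filter_upwards [ae_restrict_mem measurableSet_Ioo] with x hx
    exact (inv_pos.mpr (hu.trans hx.1)).le
  rw [h1]
  congr 1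
  rw [← MeasureTheory.integral_Ioc_eq_integral_Ioo,
    ← intervalIntegral.integral_of_le hu1.le, integral_inv_of_pos hu one_pos,
    one_div, Real.log_inv]

lemma aux_sigma {d : ℕ} (ν : Measure (Fin d → ℝ)) (hν0 : ν {0} = 0)
    (hν : ∫⁻ x, ENNReal.ofReal (min (‖x‖ ^ 2) 1) ∂ν ≠ ⊤) : SigmaFinite ν := by
  constructor
  refine ⟨⟨fun n => {0} ∪ {x | 1/(n+1:ℝ) ≤ ‖x‖}, fun _ => trivial, ?_, ?_⟩⟩
  · intro n
    have hε : (0:ℝ) < min ((1/(n+1:ℝ))^2) 1 := by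
      have h1 : (0:ℝ) < (1/(n+1:ℝ))^2 := by positivity
      exact lt_min h1 one_pos
    set ε : ℝ≥0∞ := ENNReal.ofReal (min ((1/(n+1:ℝ))^2) 1) with hεdef
    have hε0 : ε ≠ 0 := by
      rw [hεdef, ne_eq, ENNReal.ofReal_eq_zero, not_le]
      exact hε
    have hmono : {x : Fin d → ℝ | 1/(n+1:ℝ) ≤ ‖x‖}
        ⊆ {x | ε ≤ ENNReal.ofReal (min (‖x‖ ^ 2) 1)} := by
      intro x hx
      simp only [Set.mem_setOf_eq] at hx ⊢
      apply ENNReal.ofReal_le_ofReal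
      have h1 : (1/(n+1:ℝ))^2 ≤ ‖x‖^2 := pow_le_pow_left₀ (by positivity) hx 2
      exact min_le_min h1 le_rfl
    have hmeas : Measurable fun x : Fin d → ℝ =>
        ENNReal.ofReal (min (‖x‖ ^ 2) 1) :=
      ((measurable_norm.pow_const 2).min measurable_const).ennreal_ofReal
    have hb := meas_ge_le_lintegral_div (μ := ν) hmeas.aemeasurable hε0
      ENNReal.ofReal_ne_top
    calc ν ({0} ∪ {x | 1/(n+1:ℝ) ≤ ‖x‖})
        ≤ ν {0} + ν {x | 1/(n+1:ℝ) ≤ ‖x‖} := measure_union_le _ _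
      _ = ν {x | 1/(n+1:ℝ) ≤ ‖x‖} := by rw [hν0, zero_add]
      _ ≤ ν {x | ε ≤ ENNReal.ofReal (min (‖x‖ ^ 2) 1)} := measure_mono hmono
      _ ≤ (∫⁻ x, ENNReal.ofReal (min (‖x‖ ^ 2) 1) ∂ν) / ε := hb
      _ < ⊤ := ENNReal.div_lt_top hν hε0
  · ext x
    simp only [Set.mem_iUnion, Set.mem_union, Set.mem_singleton_iff, Set.mem_setOf_eq,
      Set.mem_univ, iff_true]
    by_cases hx : x = 0
    · exact ⟨0, Or.inl hx⟩
    · obtain ⟨n, hn⟩ := exists_nat_one_div_lt (norm_pos_iff.mpr hx)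
      exact ⟨n, Or.inr hn.le⟩

lemma aux_meas {d : ℕ} (ν : Measure (Fin d → ℝ)) [SFinite ν] (B : Set (Fin d → ℝ))
    (hB : MeasurableSet B) : Measurable (fun c : ℝ => ν ((c • ·) ⁻¹' B)) := by
  have hS : MeasurableSet {p : ℝ × (Fin d → ℝ) | p.1 • p.2 ∈ B} :=
    (measurable_fst.smul measurable_snd) hB
  have key : ∀ c : ℝ, ν ((c • ·) ⁻¹' B)
      = ∫⁻ x, Set.indicator {p : ℝ × (Fin d → ℝ) | p.1 • p.2 ∈ B}
          (fun _ => 1) (c, x) ∂ν := by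
    intro c
    rw [← lintegral_indicator_one (measurable_const_smul c hB)]
    refine lintegral_congr fun x => ?_
    by_cases h : c • x ∈ B <;>
      simp [Set.indicator_apply, h, Set.mem_preimage, Set.mem_setOf_eq]
  have : (fun c : ℝ => ν ((c • ·) ⁻¹' B))
      = fun c => ∫⁻ x, Set.indicator {p : ℝ × (Fin d → ℝ) | p.1 • p.2 ∈ B}
          (fun _ => 1) (c, x) ∂ν := funext key
  rw [this]
  exact Measurable.lintegral_prod_right'
    (Measurable.indicator measurable_const hS)

section helper
variable {d : ℕ} (α : ℝ) (ν : Measure (Fin d → ℝ)) [SFinite ν]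
  (B : Set (Fin d → ℝ)) (hB : MeasurableSet B)

theorem stmt_5' (hgm : Measurable (fun c : ℝ => ν ((c • ·) ⁻¹' B)))
    (νt : Set (Fin d → ℝ) → ℝ≥0∞)
    (hνt : ∀ B : Set (Fin d → ℝ),
      νt B = ∫⁻ s in Set.Ioo (0:ℝ) 1, ν (s⁻¹ • B) * ENNReal.ofReal (s ^ (-α - 1 : ℝ))) :
    ∫⁻ s in Set.Ioo (0:ℝ) 1, νt (s⁻¹ • B) * ENNReal.ofReal (s ^ (-α - 1 : ℝ))
      = ∫⁻ u in Set.Ioo (0:ℝ) 1,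
          ν (u⁻¹ • B) * ENNReal.ofReal (u ^ (-α - 1 : ℝ) * Real.log u⁻¹) := by
  classical
  set I := Set.Ioo (0:ℝ) 1 with hIdef
  set g : ℝ → ℝ≥0∞ := fun c => ν ((c • ·) ⁻¹' B) with hgdef
  have hgeq : ∀ c : ℝ, c ≠ 0 → ν (c⁻¹ • B) = g c := by
    intro c hc
    rw [hgdef]
    simp only
    rw [Set.preimage_smul₀ hc]
  set Kf : ℝ × ℝ → ℝ≥0∞ := Set.indicator {p : ℝ × ℝ | 0 < p.2 ∧ p.2 < p.1}
    (fun p => g p.2 * ENNReal.ofReal (p.2 ^ (-α - 1 : ℝ) * p.1⁻¹)) with hKfdef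
  have hSmeas : MeasurableSet {p : ℝ × ℝ | 0 < p.2 ∧ p.2 < p.1} := by
    have : {p : ℝ × ℝ | 0 < p.2 ∧ p.2 < p.1}
        = {p : ℝ × ℝ | 0 < p.2} ∩ {p : ℝ × ℝ | p.2 < p.1} := rfl
    rw [this]
    exact (measurableSet_lt measurable_const measurable_snd).inter
      (measurableSet_lt measurable_snd measurable_fst)
  have hKfm : Measurable Kf := by
    refine Measurable.indicator ?_ hSmeas
    refine (hgm.comp measurable_snd).mul ?_
    apply Measurable.ennreal_ofReal
    exact ((measurable_snd.pow_const _).mul measurable_fst.inv)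
  -- step 1
  have step1 : ∀ s ∈ I, νt (s⁻¹ • B) * ENNReal.ofReal (s ^ (-α - 1 : ℝ))
      = ∫⁻ u in I, Kf (s, u) := by
    rintro s ⟨hs0, hs1⟩
    have hs0' : s ≠ 0 := hs0.ne'
    set F : ℝ → ℝ≥0∞ := fun u => g u * ENNReal.ofReal ((u * s⁻¹) ^ (-α - 1 : ℝ))
      with hFdef
    have hFm : Measurable F := by
      refine hgm.mul ?_
      apply Measurable.ennreal_ofReal
      exact ((measurable_mul_const _).pow_const _)
    have e1 : νt (s⁻¹ • B) = ∫⁻ t in I, F (s * t) := by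
      rw [hνt]
      refine setLIntegral_congr_fun measurableSet_Ioo ?_
      rintro t ⟨ht0, ht1⟩
      have ht0' : t ≠ 0 := ht0.ne'
      have h1 : ν (t⁻¹ • s⁻¹ • B) = g (s * t) := by
        rw [smul_smul, ← mul_inv_rev, hgeq _ (mul_ne_zero hs0' ht0')]
      have h2 : s * t * s⁻¹ = t := by field_simp
      beta_reduce
      rw [h1, hFdef]
      simp only
      rw [h2]
    have e2 : ∫⁻ t in I, F (s * t) = ENNReal.ofReal s⁻¹ * ∫⁻ u in Set.Ioo 0 s, F u :=
      aux_scale F hFm hs0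
    have e3 : ∫⁻ u in I, Kf (s, u)
        = ∫⁻ u in Set.Ioo 0 s, g u * ENNReal.ofReal (u ^ (-α - 1 : ℝ) * s⁻¹) := by
      have hfun : (fun u => Kf (s, u)) = Set.indicator (Set.Ioo 0 s)
          (fun u => g u * ENNReal.ofReal (u ^ (-α - 1 : ℝ) * s⁻¹)) := by
        funext u
        by_cases h : 0 < u ∧ u < s <;>
          simp [hKfdef, Set.indicator_apply, Set.mem_Ioo, h]
      rw [hfun, lintegral_indicator measurableSet_Ioo, Measure.restrict_restrict
        measurableSet_Ioo, Set.inter_eq_left.mpr (Set.Ioo_subset_Ioo le_rfl hs1.le)]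
    rw [e1, e2, e3]
    rw [mul_comm (ENNReal.ofReal s⁻¹) _, mul_assoc, ← lintegral_mul_const' _ _
      (ENNReal.mul_ne_top ENNReal.ofReal_ne_top ENNReal.ofReal_ne_top)]
    refine setLIntegral_congr_fun measurableSet_Ioo ?_
    rintro u ⟨hu0, hus⟩
    rw [hFdef]
    simp only
    rw [mul_assoc, ← ENNReal.ofReal_mul (by positivity), ← ENNReal.ofReal_mul
      (by positivity)]
    congr 2
    rw [Real.mul_rpow hu0.le (inv_nonneg.mpr hs0.le), Real.inv_rpow hs0.le]
    have hsp : (0:ℝ) < s ^ (-α - 1 : ℝ) := Real.rpow_pos_of_pos hs0 _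
    field_simp
  -- step 2
  have step2 : ∀ u ∈ I, (∫⁻ s in I, Kf (s, u))
      = ν (u⁻¹ • B) * ENNReal.ofReal (u ^ (-α - 1 : ℝ) * Real.log u⁻¹) := by
    rintro u ⟨hu0, hu1⟩
    have hfun : (fun s => Kf (s, u)) = Set.indicator (Set.Ioi u)
        (fun s => g u * ENNReal.ofReal (u ^ (-α - 1 : ℝ)) * ENNReal.ofReal s⁻¹) := by
      funext s
      by_cases h : u < s
      · simp [hKfdef, Set.indicator_apply, hu0, h, Set.mem_Ioi,
          ENNReal.ofReal_mul (Real.rpow_nonneg hu0.le _), mul_assoc]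
      · simp [hKfdef, Set.indicator_apply, h, Set.mem_Ioi]
    have hinter : Set.Ioi u ∩ I = Set.Ioo u 1 := by
      ext s
      simp only [Set.mem_inter_iff, Set.mem_Ioi, hIdef, Set.mem_Ioo]
      constructor
      · rintro ⟨h1, _, h3⟩; exact ⟨h1, h3⟩
      · rintro ⟨h1, h2⟩; exact ⟨h1, hu0.trans h1, h2⟩
    rw [hfun, lintegral_indicator measurableSet_Ioi, Measure.restrict_restrict
      measurableSet_Ioi, hinter,
      lintegral_const_mul _ measurable_inv.ennreal_ofReal, aux_log hu0 hu1,
      hgeq u hu0.ne', mul_assoc, ← ENNReal.ofReal_mul (Real.rpow_nonneg hu0.le _)]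
  calc ∫⁻ s in I, νt (s⁻¹ • B) * ENNReal.ofReal (s ^ (-α - 1 : ℝ))
      = ∫⁻ s in I, ∫⁻ u in I, Kf (s, u) :=
        setLIntegral_congr_fun measurableSet_Ioo step1
    _ = ∫⁻ u in I, ∫⁻ s in I, Kf (s, u) := by
        refine lintegral_lintegral_swap ?_
        have : Function.uncurry (fun s u => Kf (s, u)) = Kf := by
          funext p; rfl
        rw [this]
        exact hKfm.aemeasurable
    _ = ∫⁻ u in I, ν (u⁻¹ • B) * ENNReal.ofReal (u ^ (-α - 1 : ℝ) * Real.log u⁻¹) :=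
        setLIntegral_congr_fun measurableSet_Ioo step2

end helper

/-- If ν is a Lévy measure on ℝ^d and ν̃(B) = ∫_0^1 ν(s⁻¹B) s^{-α-1} ds, then the
twice-iterated map satisfies
∫_0^1 ν̃(s⁻¹B) s^{-α-1} ds = ∫_0^1 ν(u⁻¹B) u^{-α-1} log(u⁻¹) du. -/
theorem stmt_5 {d : ℕ} (α : ℝ) (ν : Measure (Fin d → ℝ))
    (hν0 : ν {0} = 0)
    (hν : ∫⁻ x, ENNReal.ofReal (min (‖x‖ ^ 2) 1) ∂ν ≠ ⊤)
    (νt : Set (Fin d → ℝ) → ℝ≥0∞)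
    (hνt : ∀ B : Set (Fin d → ℝ),
      νt B = ∫⁻ s in Set.Ioo (0:ℝ) 1, ν (s⁻¹ • B) * ENNReal.ofReal (s ^ (-α - 1 : ℝ)))
    (B : Set (Fin d → ℝ)) (hB : MeasurableSet B) :
    ∫⁻ s in Set.Ioo (0:ℝ) 1, νt (s⁻¹ • B) * ENNReal.ofReal (s ^ (-α - 1 : ℝ))
      = ∫⁻ u in Set.Ioo (0:ℝ) 1,
          ν (u⁻¹ • B) * ENNReal.ofReal (u ^ (-α - 1 : ℝ) * Real.log u⁻¹) := by
  haveI : SigmaFinite ν := aux_sigma ν hν0 hν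
  exact stmt_5' α ν B (aux_meas ν B hB) νt hνt
end

section
/- Let α ∈ ℝ, and let ν_ξ be a measure on (0,∞). Define ℓ̃(u) = ∫_u^∞ r^α ν_ξ(dr) (assumed finite for all u > 0). Then for every Borel set B ⊆ (0,∞), ∫_0^1 s^{-α-1} (∫_0^∞ 1_B(sr) ν_ξ(dr)) ds = ∫_0^∞ 1_B(u) u^{-α-1} ℓ̃(u) du. -/
open MeasureTheory
open scoped ENNReal

/-- For a measure ν_ξ on (0,∞) with ℓ̃(u) = ∫_u^∞ r^α ν_ξ(dr) finite, for every
Borel set B ⊆ (0,∞),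
∫_0^1 s^{-α-1} (∫_0^∞ 1_B(sr) ν_ξ(dr)) ds = ∫_0^∞ 1_B(u) u^{-α-1} ℓ̃(u) du. -/
theorem stmt_11 (α : ℝ) (ν : Measure ℝ) (hν : ν (Set.Iic 0) = 0)
    (ℓ : ℝ → ℝ≥0∞)
    (hℓ : ∀ u : ℝ, 0 < u → ℓ u = ∫⁻ r in Set.Ioi u, ENNReal.ofReal (r ^ α) ∂ν)
    (hℓfin : ∀ u : ℝ, 0 < u → ℓ u ≠ ⊤)
    (B : Set ℝ) (hB : MeasurableSet B) (hB' : B ⊆ Set.Ioi 0) :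
    ∫⁻ s in Set.Ioo (0:ℝ) 1,
        ENNReal.ofReal (s ^ (-α - 1 : ℝ)) *
          ∫⁻ r in Set.Ioi (0:ℝ), B.indicator (fun _ => (1 : ℝ≥0∞)) (s * r) ∂ν
      = ∫⁻ u in Set.Ioi (0:ℝ),
          B.indicator (fun _ => (1 : ℝ≥0∞)) u * ENNReal.ofReal (u ^ (-α - 1 : ℝ)) * ℓ u := by
  classical
  set ind : ℝ → ℝ≥0∞ := B.indicator (fun _ => (1 : ℝ≥0∞)) with hind_def
  have mind : Measurable ind := measurable_const.indicator hB
  have mpow : ∀ c : ℝ, Measurable fun x : ℝ => ENNReal.ofReal (x ^ c) := by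
    intro c; measurability
  -- ν is finite on Ioc a b for 0 < a
  have hfin : ∀ a b : ℝ, 0 < a → a ≤ b → ν (Set.Ioc a b) ≠ ⊤ := by
    intro a b ha hab
    have hb : (0:ℝ) < b := ha.trans_le hab
    set m : ℝ := min (a ^ α) (b ^ α) with hm_def
    have hm : 0 < m := lt_min (Real.rpow_pos_of_pos ha α) (Real.rpow_pos_of_pos hb α)
    have key : ENNReal.ofReal m * ν (Set.Ioc a b) ≤ ℓ a := by
      rw [hℓ a ha]
      calc ENNReal.ofReal m * ν (Set.Ioc a b)
          = ∫⁻ _ in Set.Ioc a b, ENNReal.ofReal m ∂ν := (setLIntegral_const _ _).symm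
        _ ≤ ∫⁻ r in Set.Ioc a b, ENNReal.ofReal (r ^ α) ∂ν := by
            refine setLIntegral_mono (mpow α) ?_
            intro r hr
            refine ENNReal.ofReal_le_ofReal ?_
            rcases le_total 0 α with hα | hα
            · exact le_trans (min_le_left _ _) (Real.rpow_le_rpow ha.le hr.1.le hα)
            · exact le_trans (min_le_right _ _) (Real.rpow_le_rpow_of_nonpos (ha.trans hr.1) hr.2 hα)
        _ ≤ ∫⁻ r in Set.Ioi a, ENNReal.ofReal (r ^ α) ∂ν :=
            lintegral_mono_set Set.Ioc_subset_Ioi_self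
    intro htop
    rw [htop, ENNReal.mul_top (by simpa using hm)] at key
    exact hℓfin a ha (top_le_iff.mp key)
  haveI hsf : SigmaFinite ν := by
    refine ⟨⟨⟨fun n => Set.Iic 0 ∪ Set.Ioc ((n + 1 : ℝ))⁻¹ (n + 1), fun _ => trivial, ?_, ?_⟩⟩⟩
    · intro n
      have h1 : (0:ℝ) < ((n : ℝ) + 1)⁻¹ := by positivity
      have h2 : ((n : ℝ) + 1)⁻¹ ≤ (n : ℝ) + 1 := by
        have : (1:ℝ) ≤ (n : ℝ) + 1 := by
          have := Nat.cast_nonneg (α := ℝ) n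
          linarith
        calc ((n : ℝ) + 1)⁻¹ ≤ 1 := by
              rw [inv_le_one_iff₀]; right; exact this
          _ ≤ (n : ℝ) + 1 := this
      calc ν (Set.Iic 0 ∪ Set.Ioc ((n + 1 : ℝ))⁻¹ (n + 1))
          ≤ ν (Set.Iic 0) + ν (Set.Ioc ((n + 1 : ℝ))⁻¹ (n + 1)) := measure_union_le _ _
        _ < ⊤ := by
            rw [hν, zero_add]
            exact (hfin _ _ h1 h2).lt_top
    · refine Set.eq_univ_of_forall fun x => ?_
      rcases le_or_gt x 0 with hx | hx
      · exact Set.mem_iUnion.2 ⟨0, Or.inl hx⟩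
      · obtain ⟨n, hn⟩ := exists_nat_ge (max x x⁻¹)
        refine Set.mem_iUnion.2 ⟨n, Or.inr ⟨?_, ?_⟩⟩
        · have hxi : x⁻¹ < (n : ℝ) + 1 :=
            lt_of_le_of_lt (le_trans (le_max_right _ _) hn) (by linarith)
          calc ((n:ℝ) + 1)⁻¹ < (x⁻¹)⁻¹ := by
                exact inv_strictAnti₀ (inv_pos.2 hx) hxi
            _ = x := inv_inv x
        · exact le_trans (le_trans (le_max_left _ _) hn) (by linarith)
  -- the two-variable function after substitution
  set G : ℝ → ℝ → ℝ≥0∞ := fun u r =>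
    ind u * ENNReal.ofReal (u ^ (-α - 1 : ℝ)) *
      (Set.Ioi u).indicator (fun x => ENNReal.ofReal (x ^ α)) r with hG_def
  have mG : Measurable fun p : ℝ × ℝ => G p.1 p.2 := by
    have h1 : (fun p : ℝ × ℝ => (Set.Ioi p.1).indicator (fun x => ENNReal.ofReal (x ^ α)) p.2)
        = {p : ℝ × ℝ | p.1 < p.2}.indicator (fun p => ENNReal.ofReal (p.2 ^ α)) := by
      funext p
      by_cases h : p.1 < p.2 <;> simp [Set.indicator, h]
    refine Measurable.mul (Measurable.mul ?_ ?_) ?_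
    · exact mind.comp measurable_fst
    · exact (mpow _).comp measurable_fst
    · rw [h1]
      exact Measurable.indicator ((mpow α).comp measurable_snd)
        (measurableSet_lt measurable_fst measurable_snd)
  -- Claim A: substitution in the inner integral
  have keyA : ∀ r : ℝ, 0 < r →
      (∫⁻ s in Set.Ioo (0:ℝ) 1, ENNReal.ofReal (s ^ (-α - 1 : ℝ)) * ind (s * r))
        = ∫⁻ u in Set.Ioi (0:ℝ), G u r := by
    intro r hr
    set h : ℝ → ℝ≥0∞ := fun u =>
      ind u * ENNReal.ofReal (u ^ (-α - 1 : ℝ)) * ENNReal.ofReal (r ^ (α + 1 : ℝ)) with hh_def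
    have mh : Measurable h := ((mind.mul (mpow _)).mul_const _)
    have step1 : (∫⁻ s in Set.Ioo (0:ℝ) 1, ENNReal.ofReal (s ^ (-α - 1 : ℝ)) * ind (s * r))
        = ∫⁻ s in Set.Ioo (0:ℝ) 1, h (s * r) := by
      refine setLIntegral_congr_fun measurableSet_Ioo ?_
      intro s hs
      have hs0 : (0:ℝ) < s := hs.1
      have e1 : ((s * r : ℝ) ^ (-α - 1 : ℝ)) = s ^ (-α - 1 : ℝ) * r ^ (-α - 1 : ℝ) :=
        Real.mul_rpow hs0.le hr.le
      have e2 : ENNReal.ofReal ((s * r) ^ (-α - 1 : ℝ)) * ENNReal.ofReal (r ^ (α + 1 : ℝ))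
          = ENNReal.ofReal (s ^ (-α - 1 : ℝ)) := by
        rw [← ENNReal.ofReal_mul (by positivity), e1]
        congr 1
        rw [mul_assoc, ← Real.rpow_add hr]
        norm_num
      simp only [hh_def]
      rw [mul_assoc, e2, mul_comm]
    rw [step1]
    have preim : (fun s : ℝ => s * r) ⁻¹' Set.Ioo 0 r = Set.Ioo 0 1 := by
      ext s
      simp only [Set.mem_preimage, Set.mem_Ioo]
      constructor
      · rintro ⟨h1, h2⟩
        have hs : 0 < s := by
          rcases mul_pos_iff.mp h1 with ⟨hs, _⟩ | ⟨_, hr'⟩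
          · exact hs
          · exact absurd hr' (not_lt.2 hr.le)
        have h2' : s * r < 1 * r := by linarith
        exact ⟨hs, (mul_lt_mul_iff_left₀ hr).mp h2'⟩
      · rintro ⟨h1, h2⟩
        refine ⟨mul_pos h1 hr, ?_⟩
        have := (mul_lt_mul_iff_left₀ hr).mpr h2
        linarith
    have step2 : (∫⁻ s in Set.Ioo (0:ℝ) 1, h (s * r))
        = ENNReal.ofReal r⁻¹ * ∫⁻ u in Set.Ioo (0:ℝ) r, h u := by
      have e3 : ∫⁻ s in Set.Ioo (0:ℝ) 1, h (s * r)
          = ∫⁻ u, h u ∂(Measure.map (fun s : ℝ => s * r) (volume.restrict (Set.Ioo 0 1))) :=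
        (lintegral_map mh (measurable_mul_const r)).symm
      have mapeq : Measure.map (fun s : ℝ => s * r) (volume.restrict (Set.Ioo 0 1))
          = (ENNReal.ofReal |r⁻¹| • volume).restrict (Set.Ioo 0 r) := by
        rw [← preim, ← Measure.restrict_map (measurable_mul_const r) measurableSet_Ioo,
          Real.map_volume_mul_right (ne_of_gt hr)]
      rw [e3, mapeq, Measure.restrict_smul, lintegral_smul_measure, abs_of_pos (inv_pos.2 hr), smul_eq_mul]
    rw [step2]
    have step3 : ENNReal.ofReal r⁻¹ * ∫⁻ u in Set.Ioo (0:ℝ) r, h u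
        = ∫⁻ u in Set.Ioo (0:ℝ) r,
            ind u * ENNReal.ofReal (u ^ (-α - 1 : ℝ)) * ENNReal.ofReal (r ^ α) := by
      rw [← lintegral_const_mul' _ _ ENNReal.ofReal_ne_top]
      refine setLIntegral_congr_fun measurableSet_Ioo ?_
      intro u _
      simp only [hh_def]
      have e4 : ENNReal.ofReal r⁻¹ * ENNReal.ofReal (r ^ (α + 1 : ℝ)) = ENNReal.ofReal (r ^ α) := by
        rw [← ENNReal.ofReal_mul (by positivity)]
        congr 1
        rw [Real.rpow_add hr, Real.rpow_one]
        field_simp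
      calc ENNReal.ofReal r⁻¹ * (ind u * ENNReal.ofReal (u ^ (-α - 1 : ℝ)) * ENNReal.ofReal (r ^ (α + 1 : ℝ)))
          = ind u * ENNReal.ofReal (u ^ (-α - 1 : ℝ)) * (ENNReal.ofReal r⁻¹ * ENNReal.ofReal (r ^ (α + 1 : ℝ))) := by ring
        _ = ind u * ENNReal.ofReal (u ^ (-α - 1 : ℝ)) * ENNReal.ofReal (r ^ α) := by rw [e4]
    rw [step3]
    -- step 4 : indicator rewriting
    have e5 : ∀ u : ℝ, G u r
        = (Set.Iio r).indicator
            (fun u => ind u * ENNReal.ofReal (u ^ (-α - 1 : ℝ)) * ENNReal.ofReal (r ^ α)) u := by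
      intro u
      by_cases h : u < r <;> simp [hG_def, Set.indicator, h]
    calc ∫⁻ u in Set.Ioo (0:ℝ) r,
            ind u * ENNReal.ofReal (u ^ (-α - 1 : ℝ)) * ENNReal.ofReal (r ^ α)
        = ∫⁻ u in Set.Iio r,
            ind u * ENNReal.ofReal (u ^ (-α - 1 : ℝ)) * ENNReal.ofReal (r ^ α)
            ∂(volume.restrict (Set.Ioi 0)) := by
          rw [Measure.restrict_restrict measurableSet_Iio]
          congr 1
          rw [Set.inter_comm, Set.Ioi_inter_Iio]
      _ = ∫⁻ u in Set.Ioi (0:ℝ), G u r := by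
          rw [← lintegral_indicator measurableSet_Iio]
          refine lintegral_congr fun u => ?_
          exact (e5 u).symm
  -- Main chain
  calc ∫⁻ s in Set.Ioo (0:ℝ) 1,
        ENNReal.ofReal (s ^ (-α - 1 : ℝ)) * ∫⁻ r in Set.Ioi (0:ℝ), ind (s * r) ∂ν
      = ∫⁻ s in Set.Ioo (0:ℝ) 1, ∫⁻ r in Set.Ioi (0:ℝ),
          ENNReal.ofReal (s ^ (-α - 1 : ℝ)) * ind (s * r) ∂ν := by
        refine lintegral_congr fun s => ?_
        rw [lintegral_const_mul' _ _ ENNReal.ofReal_ne_top]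
    _ = ∫⁻ r in Set.Ioi (0:ℝ), ∫⁻ s in Set.Ioo (0:ℝ) 1,
          ENNReal.ofReal (s ^ (-α - 1 : ℝ)) * ind (s * r) ∂volume ∂ν := by
        refine lintegral_lintegral_swap ?_
        exact (((mpow _).comp measurable_fst).mul
          (mind.comp (measurable_fst.mul measurable_snd))).aemeasurable
    _ = ∫⁻ r in Set.Ioi (0:ℝ), ∫⁻ u in Set.Ioi (0:ℝ), G u r ∂volume ∂ν := by
        refine setLIntegral_congr_fun measurableSet_Ioi ?_
        intro r hr
        exact keyA r hr
    _ = ∫⁻ u in Set.Ioi (0:ℝ), ∫⁻ r in Set.Ioi (0:ℝ), G u r ∂ν ∂volume := by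
        refine (lintegral_lintegral_swap ?_).symm
        exact mG.aemeasurable
    _ = ∫⁻ u in Set.Ioi (0:ℝ), ind u * ENNReal.ofReal (u ^ (-α - 1 : ℝ)) * ℓ u := by
        refine setLIntegral_congr_fun measurableSet_Ioi ?_
        intro u hu
        have hcne : ind u * ENNReal.ofReal (u ^ (-α - 1 : ℝ)) ≠ ⊤ := by
          have : ind u ≠ ⊤ := by
            by_cases h : u ∈ B <;> simp [hind_def, Set.indicator, h]
          exact ENNReal.mul_ne_top this ENNReal.ofReal_ne_top
        calc ∫⁻ r in Set.Ioi (0:ℝ), G u r ∂ν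
            = ind u * ENNReal.ofReal (u ^ (-α - 1 : ℝ)) *
              ∫⁻ r in Set.Ioi (0:ℝ),
                (Set.Ioi u).indicator (fun x => ENNReal.ofReal (x ^ α)) r ∂ν := by
              simp only [hG_def]
              rw [lintegral_const_mul' _ _ hcne]
          _ = ind u * ENNReal.ofReal (u ^ (-α - 1 : ℝ)) * ℓ u := by
              congr 1
              rw [lintegral_indicator measurableSet_Ioi, Measure.restrict_restrict measurableSet_Ioi,
                Set.Ioi_inter_Ioi, max_eq_left hu.le, hℓ u hu]
end

section
/- Let 0 < α < 1 and let ν be a Lévy measure on ℝ^d with ∫_{|x|>1}|x|^α (log|x|)^m ν(dx) < ∞ for some integer m ≥ 0. Define ν̃(B) = ∫_0^1 ν(s^{-1}B) s^{-α-1} ds. Then ∫_{|x|>1} |x|^α (log|x|)^m ν̃(dx) < ∞ if and only if ∫_{|x|>1} |x|^α (log|x|)^{m+1} ν(dx) < ∞; in fact ∫_{|x|>1}|x|^α(log|x|)^m ν̃(dx) = ∫_{|y|>1} |y|^α (log|y|)^{m+1}/(m+1) ν(dy). -/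
open MeasureTheory
open scoped ENNReal Pointwise

lemma aux_ftc (α : ℝ) (m : ℕ) (r : ℝ) (hr : 1 < r) :
    ∫ s in (1/r)..1, r ^ α * (Real.log (s * r)) ^ m / s
      = r ^ α * (Real.log r) ^ (m + 1) / (m + 1) := by
  have hr0 : (0:ℝ) < r := by linarith
  have hinv : 0 < 1 / r := by positivity
  have hle : 1 / r ≤ 1 := by
    rw [div_le_one hr0]; linarith
  have hderiv : ∀ s ∈ Set.uIcc (1/r) 1,
      HasDerivAt (fun s => r ^ α * (Real.log (s * r)) ^ (m + 1) / (m + 1))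
        (r ^ α * (Real.log (s * r)) ^ m / s) s := by
    intro s hs
    rw [Set.uIcc_of_le hle] at hs
    have hs0 : 0 < s := lt_of_lt_of_le hinv hs.1
    have hsr : s * r ≠ 0 := by positivity
    have h1 : HasDerivAt (fun s : ℝ => s * r) r s := by
      simpa using (hasDerivAt_id s).mul_const r
    have h2 : HasDerivAt (fun s : ℝ => Real.log (s * r)) ((s * r)⁻¹ * r) s :=
      by have := (Real.hasDerivAt_log hsr).comp s h1; exact this
    have h3 : HasDerivAt (fun s : ℝ => (Real.log (s * r)) ^ (m + 1))
        ((m + 1 : ℕ) * (Real.log (s * r)) ^ m * ((s * r)⁻¹ * r)) s := by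
      exact (HasDerivAt.pow h2 (m+1))
    have h4 := (h3.const_mul (r ^ α)).div_const ((m : ℝ) + 1)
    convert h4 using 1
    · rfl
    · rfl
    have hm : ((m : ℝ) + 1) ≠ 0 := by positivity
    push_cast; field_simp
  have hcont : ContinuousOn (fun s => r ^ α * (Real.log (s * r)) ^ m / s)
      (Set.uIcc (1/r) 1) := by
    rw [Set.uIcc_of_le hle]
    apply ContinuousOn.div
    · apply ContinuousOn.mul continuousOn_const
      apply ContinuousOn.pow
      apply Real.continuousOn_log.comp (continuousOn_id.mul continuousOn_const)
      intro s hs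
      have hs0 : 0 < s := lt_of_lt_of_le hinv hs.1
      simp only [Set.mem_compl_iff, Set.mem_singleton_iff, id]
      exact (mul_pos hs0 hr0).ne'
    · exact continuousOn_id
    · intro s hs
      have hs0 : 0 < s := lt_of_lt_of_le hinv hs.1
      exact ne_of_gt hs0
  rw [intervalIntegral.integral_eq_sub_of_hasDerivAt hderiv
    (hcont.intervalIntegrable)]
  have : (1 / r) * r = 1 := by field_simp
  rw [this]
  simp [Real.log_one]

lemma aux_inner (α : ℝ) (m : ℕ) (r : ℝ) (hr : 1 < r) :
    ∫⁻ s in Set.Ioo (0:ℝ) 1,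
        (if 1 < s * r then ENNReal.ofReal ((s * r) ^ α * (Real.log (s * r)) ^ m) else 0)
          * ENNReal.ofReal (s ^ (-α - 1 : ℝ))
      = ENNReal.ofReal (r ^ α * (Real.log r) ^ (m + 1) / (m + 1)) := by
  have hr0 : (0:ℝ) < r := by linarith
  have hinv : 0 < 1 / r := by positivity
  have hle : 1 / r ≤ 1 := by rw [div_le_one hr0]; linarith
  have hsub : Set.Ioo (1/r) 1 ⊆ Set.Ioo (0:ℝ) 1 :=
    Set.Ioo_subset_Ioo (le_of_lt hinv) le_rfl
  set g : ℝ → ℝ := fun s => r ^ α * (Real.log (s * r)) ^ m / s with hg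
  have step1 : ∫⁻ s in Set.Ioo (0:ℝ) 1,
        (if 1 < s * r then ENNReal.ofReal ((s * r) ^ α * (Real.log (s * r)) ^ m) else 0)
          * ENNReal.ofReal (s ^ (-α - 1 : ℝ))
      = ∫⁻ s in Set.Ioo (0:ℝ) 1,
          (Set.Ioo (1/r) 1).indicator (fun s => ENNReal.ofReal (g s)) s := by
    apply setLIntegral_congr_fun measurableSet_Ioo
    intro s hs
    beta_reduce
    have hs0 : 0 < s := hs.1
    have hiff : 1 < s * r ↔ 1/r < s := by
      rw [div_lt_iff₀ hr0]
    by_cases h : 1/r < s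
    · have h1 : 1 < s * r := hiff.mpr h
      have hlog : 0 ≤ Real.log (s * r) := Real.log_nonneg h1.le
      rw [if_pos h1, Set.indicator_of_mem (Set.mem_Ioo.mpr ⟨h, hs.2⟩)]
      rw [← ENNReal.ofReal_mul (by positivity)]
      congr 1
      have : (s * r) ^ α = s ^ α * r ^ α := Real.mul_rpow hs0.le hr0.le
      rw [this, hg]
      have h2 : s ^ α * r ^ α * Real.log (s * r) ^ m * s ^ (-α - 1 : ℝ)
          = r ^ α * Real.log (s * r) ^ m * (s ^ α * s ^ (-α - 1 : ℝ)) := by ring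
      rw [h2, ← Real.rpow_add hs0]
      have : α + (-α - 1) = (-1 : ℝ) := by ring
      rw [this, Real.rpow_neg_one]
      field_simp
    · have h1 : ¬ (1 < s * r) := fun hc => h (hiff.mp hc)
      rw [if_neg h1, Set.indicator_of_notMem (by
        intro hc
        exact h hc.1), zero_mul]
  rw [step1, lintegral_indicator measurableSet_Ioo,
    Measure.restrict_restrict measurableSet_Ioo,
    Set.inter_eq_left.mpr hsub]
  have hcont : ContinuousOn g (Set.Icc (1/r) 1) := by
    apply ContinuousOn.div
    · apply ContinuousOn.mul continuousOn_const
      apply ContinuousOn.pow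
      apply Real.continuousOn_log.comp (continuousOn_id.mul continuousOn_const)
      intro s hs
      have hs0 : 0 < s := lt_of_lt_of_le hinv hs.1
      simp only [Set.mem_compl_iff, Set.mem_singleton_iff, id]
      exact (mul_pos hs0 hr0).ne'
    · exact continuousOn_id
    · intro s hs
      exact ne_of_gt (lt_of_lt_of_le hinv hs.1)
  have hint : IntegrableOn g (Set.Ioo (1/r) 1) volume :=
    (hcont.integrableOn_Icc).mono_set Set.Ioo_subset_Icc_self
  have hnn : 0 ≤ᶠ[ae (volume.restrict (Set.Ioo (1/r) 1))] g := by
    rw [Filter.EventuallyLE, ae_restrict_iff' measurableSet_Ioo]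
    filter_upwards with s hs
    have hs0 : 0 < s := lt_trans hinv hs.1
    have hsr : 1 < s * r := (div_lt_iff₀ hr0).mp hs.1
    have hlog : 0 ≤ Real.log (s * r) := Real.log_nonneg hsr.le
    simp only [Pi.zero_apply, hg]
    positivity
  rw [← ofReal_integral_eq_lintegral_ofReal hint hnn,
    ← integral_Ioc_eq_integral_Ioo, ← intervalIntegral.integral_of_le hle,
    aux_ftc α m r hr]

/-- For 0 < α < 1, m ≥ 0 and a Lévy measure ν with
∫_{|x|>1}|x|^α(log|x|)^m ν(dx) < ∞, the measure ν̃(B) = ∫_0^1 ν(s⁻¹B)s^{-α-1}ds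
satisfies ∫_{|x|>1}|x|^α(log|x|)^m ν̃(dx) = ∫_{|y|>1}|y|^α(log|y|)^{m+1}/(m+1) ν(dy);
in particular the left side is finite iff ∫_{|x|>1}|x|^α(log|x|)^{m+1} ν(dx) < ∞. -/
theorem stmt_14 {d : ℕ} (α : ℝ) (hα1 : 0 < α) (hα2 : α < 1) (m : ℕ)
    (ν : Measure (Fin d → ℝ)) (hν0 : ν {0} = 0)
    (hν : ∫⁻ x, ENNReal.ofReal (min (‖x‖ ^ 2) 1) ∂ν ≠ ⊤)
    (hνm : ∫⁻ x in {x : Fin d → ℝ | 1 < ‖x‖},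
      ENNReal.ofReal (‖x‖ ^ α * (Real.log ‖x‖) ^ m) ∂ν ≠ ⊤)
    (νt : Measure (Fin d → ℝ))
    (hνt : ∀ B : Set (Fin d → ℝ), MeasurableSet B →
      νt B = ∫⁻ s in Set.Ioo (0:ℝ) 1, ν (s⁻¹ • B) * ENNReal.ofReal (s ^ (-α - 1 : ℝ))) :
    (∫⁻ x in {x : Fin d → ℝ | 1 < ‖x‖},
        ENNReal.ofReal (‖x‖ ^ α * (Real.log ‖x‖) ^ m) ∂νt
      = ∫⁻ y in {y : Fin d → ℝ | 1 < ‖y‖},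
          ENNReal.ofReal (‖y‖ ^ α * (Real.log ‖y‖) ^ (m + 1) / (m + 1)) ∂ν) ∧
    ((∫⁻ x in {x : Fin d → ℝ | 1 < ‖x‖},
        ENNReal.ofReal (‖x‖ ^ α * (Real.log ‖x‖) ^ m) ∂νt ≠ ⊤) ↔
      ∫⁻ x in {x : Fin d → ℝ | 1 < ‖x‖},
        ENNReal.ofReal (‖x‖ ^ α * (Real.log ‖x‖) ^ (m + 1)) ∂ν ≠ ⊤) := by
  classical
  set S : Set (Fin d → ℝ) := {x : Fin d → ℝ | 1 < ‖x‖} with hSdef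
  have hSmeas : MeasurableSet S := measurableSet_lt measurable_const measurable_norm
  set f : (Fin d → ℝ) → ℝ≥0∞ := fun y => ENNReal.ofReal (‖y‖ ^ α * (Real.log ‖y‖) ^ m)
    with hfdef
  have hfmeas : Measurable f := by
    apply Measurable.ennreal_ofReal
    exact (measurable_norm.pow_const α).mul ((measurable_norm.log).pow_const m)
  -- σ-finiteness of ν
  have hfin : ∀ n : ℕ, ν {x : Fin d → ℝ | 1/(n+1) < ‖x‖} ≠ ⊤ := by
    intro n
    set ε : ℝ≥0∞ := ENNReal.ofReal (min ((1/((n:ℝ)+1))^2) 1) with hε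
    have hεpos : 0 < ε := by
      rw [hε]; apply ENNReal.ofReal_pos.mpr
      have : (0:ℝ) < (1/((n:ℝ)+1))^2 := by positivity
      exact lt_min this one_pos
    have hsubset : {x : Fin d → ℝ | 1/((n:ℝ)+1) < ‖x‖}
        ⊆ {x | ε ≤ ENNReal.ofReal (min (‖x‖^2) 1)} := by
      intro x hx
      simp only [Set.mem_setOf_eq] at hx ⊢
      apply ENNReal.ofReal_le_ofReal
      have h1 : (1/((n:ℝ)+1))^2 ≤ ‖x‖^2 := by
        apply pow_le_pow_left₀ (by positivity) hx.le
      exact min_le_min h1 le_rfl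
    have hb := mul_meas_ge_le_lintegral₀ (μ := ν)
      (f := fun x => ENNReal.ofReal (min (‖x‖^2) 1))
      (by
        apply Measurable.aemeasurable
        apply Measurable.ennreal_ofReal
        exact ((measurable_norm.pow_const 2).min measurable_const)) ε
    intro hcontra
    have htop : ν {x | ε ≤ ENNReal.ofReal (min (‖x‖^2) 1)} = ⊤ :=
      top_le_iff.mp (hcontra ▸ measure_mono hsubset)
    rw [htop, ENNReal.mul_top hεpos.ne'] at hb
    exact hν (top_le_iff.mp hb)
  haveI hsf : SigmaFinite ν := by
    refine ⟨⟨⟨fun n => {0} ∪ {x : Fin d → ℝ | 1/((n:ℝ)+1) < ‖x‖},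
      fun _ => trivial, ?_, ?_⟩⟩⟩
    · intro n
      apply lt_of_le_of_lt (measure_union_le _ _)
      rw [hν0, zero_add]
      exact (hfin n).lt_top
    · apply Set.eq_univ_of_forall
      intro x
      by_cases hx : x = 0
      · exact Set.mem_iUnion.mpr ⟨0, Or.inl hx⟩
      · have hx0 : 0 < ‖x‖ := norm_pos_iff.mpr hx
        obtain ⟨n, hn⟩ := exists_nat_one_div_lt hx0
        exact Set.mem_iUnion.mpr ⟨n, Or.inr hn⟩
  -- the product-measure representation of νt
  set w : ℝ → ℝ≥0∞ := fun s => ENNReal.ofReal (s ^ (-α - 1 : ℝ)) with hwdef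
  have hwmeas : Measurable w := by
    apply Measurable.ennreal_ofReal
    exact measurable_id.pow_const _
  set T : ℝ × (Fin d → ℝ) → (Fin d → ℝ) := fun p => p.1 • p.2 with hTdef
  have hTmeas : Measurable T := (continuous_fst.smul continuous_snd).measurable
  set μ0 : Measure ℝ := (volume.restrict (Set.Ioo 0 1)).withDensity w with hμ0def
  have hmap : νt = Measure.map T (μ0.prod ν) := by
    ext B hB
    rw [hνt B hB, Measure.map_apply hTmeas hB, Measure.prod_apply (hTmeas hB), hμ0def,
      lintegral_withDensity_eq_lintegral_mul _ hwmeas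
        (measurable_measure_prodMk_left (hTmeas hB))]
    refine setLIntegral_congr_fun measurableSet_Ioo ?_
    intro s hs
    have hs0 : s ≠ 0 := ne_of_gt hs.1
    have hpre : Prod.mk s ⁻¹' (T ⁻¹' B) = s⁻¹ • B := by
      rw [← Set.preimage_smul₀ hs0 B]; rfl
    simp only [Pi.mul_apply, hpre]
    rw [mul_comm]
  -- the inner integral identity
  have hinner : ∀ x : Fin d → ℝ, (∫⁻ s, S.indicator f (T (s, x)) ∂μ0)
      = S.indicator (fun y => ENNReal.ofReal
          (‖y‖ ^ α * (Real.log ‖y‖) ^ (m + 1) / (m + 1))) x := by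
    intro x
    have hmx : Measurable fun s : ℝ => S.indicator f (T (s, x)) := by
      apply (hfmeas.indicator hSmeas).comp
      exact hTmeas.comp (measurable_id.prodMk measurable_const)
    rw [hμ0def, lintegral_withDensity_eq_lintegral_mul _ hwmeas hmx]
    by_cases hx : 1 < ‖x‖
    · rw [Set.indicator_of_mem (show x ∈ S from hx)]
      rw [← aux_inner α m ‖x‖ hx]
      refine setLIntegral_congr_fun measurableSet_Ioo ?_
      intro s hs
      have hnorm : ‖s • x‖ = s * ‖x‖ := by
        rw [norm_smul, Real.norm_eq_abs, abs_of_pos hs.1]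
      simp only [Pi.mul_apply, hTdef]
      rw [Set.indicator_apply]
      by_cases hmem : s • x ∈ S
      · have h1 : 1 < s * ‖x‖ := by rw [← hnorm]; exact hmem
        rw [if_pos hmem, if_pos h1, hfdef]
        simp only [hnorm]
        rw [mul_comm]
      · have h1 : ¬ (1 < s * ‖x‖) := by rw [← hnorm]; exact hmem
        rw [if_neg hmem, if_neg h1, mul_zero, zero_mul]
    · rw [Set.indicator_of_notMem (show x ∉ S from hx)]
      rw [← lintegral_zero (μ := volume.restrict (Set.Ioo (0:ℝ) 1))]
      refine setLIntegral_congr_fun measurableSet_Ioo ?_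
      intro s hs
      have hxle : ‖x‖ ≤ 1 := not_lt.mp hx
      have hnorm : ‖s • x‖ = s * ‖x‖ := by
        rw [norm_smul, Real.norm_eq_abs, abs_of_pos hs.1]
      have hns : ¬ (s • x ∈ S) := by
        simp only [hSdef, Set.mem_setOf_eq, hnorm, not_lt]
        calc s * ‖x‖ ≤ s * 1 := by
              apply mul_le_mul_of_nonneg_left hxle hs.1.le
          _ = s := mul_one s
          _ ≤ 1 := hs.2.le
      simp only [Pi.mul_apply, hTdef, Set.indicator_of_notMem hns, mul_zero]
  -- main identity
  have hmain : ∫⁻ x in S, f x ∂νt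
      = ∫⁻ y in S, ENNReal.ofReal
          (‖y‖ ^ α * (Real.log ‖y‖) ^ (m + 1) / (m + 1)) ∂ν := by
    calc ∫⁻ x in S, f x ∂νt
        = ∫⁻ x, S.indicator f x ∂(Measure.map T (μ0.prod ν)) := by
          rw [hmap, lintegral_indicator hSmeas]
      _ = ∫⁻ p, S.indicator f (T p) ∂(μ0.prod ν) :=
          lintegral_map (hfmeas.indicator hSmeas) hTmeas
      _ = ∫⁻ x, (∫⁻ s, S.indicator f (T (s, x)) ∂μ0) ∂ν :=
          lintegral_prod_symm _ (((hfmeas.indicator hSmeas).comp hTmeas).aemeasurable)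
      _ = ∫⁻ x, S.indicator (fun y => ENNReal.ofReal
            (‖y‖ ^ α * (Real.log ‖y‖) ^ (m + 1) / (m + 1))) x ∂ν :=
          lintegral_congr hinner
      _ = ∫⁻ y in S, ENNReal.ofReal
            (‖y‖ ^ α * (Real.log ‖y‖) ^ (m + 1) / (m + 1)) ∂ν :=
          lintegral_indicator hSmeas _
  refine ⟨hmain, ?_⟩
  rw [hmain]
  set c : ℝ≥0∞ := (ENNReal.ofReal ((m:ℝ)+1))⁻¹ with hc
  have hm1 : (0:ℝ) < (m:ℝ) + 1 := by positivity
  have hc0 : c ≠ 0 := by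
    rw [hc]
    simp [ENNReal.ofReal_ne_top]
  have hctop : c ≠ ⊤ := by
    rw [hc]
    simp [ENNReal.ofReal_pos.mpr hm1, (ENNReal.ofReal_pos.mpr hm1).ne']
  have hconst : ∫⁻ y in S, ENNReal.ofReal
        (‖y‖ ^ α * (Real.log ‖y‖) ^ (m + 1) / (m + 1)) ∂ν
      = (∫⁻ x in S, ENNReal.ofReal (‖x‖ ^ α * (Real.log ‖x‖) ^ (m + 1)) ∂ν) * c := by
    rw [← lintegral_mul_const' c _ hctop]
    refine setLIntegral_congr_fun hSmeas ?_
    intro x hx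
    beta_reduce
    have hx1 : (1:ℝ) < ‖x‖ := hx
    have hlog : 0 ≤ Real.log ‖x‖ := Real.log_nonneg hx1.le
    rw [div_eq_mul_inv, ENNReal.ofReal_mul (by positivity), hc,
      ENNReal.ofReal_inv_of_pos hm1]
  rw [hconst]
  constructor
  · intro h hcontra
    rw [hcontra, ENNReal.top_mul hc0] at h
    exact h rfl
  · intro h
    exact ENNReal.mul_ne_top h hctop
end
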